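/- arXiv:1009.4144 — 3 statements merged into one kernel-verified Lean document; each statement's English description precedes it below -/
import Mathlib

section
/- Let H be a reproducing kernel Hilbert space of functions X → ℂ with kernel L. A function f: X → ℂ lies in the closed unit ball of H if and only if the kernel L(x,y) − f(x)·conj(f(y)) is positive semi-definite on X. -/
open ComplexConjugate ComplexOrder

/-- A scalar kernel is positive semi-definite if all its finite Gram matrices are PSD. -/
def IsPSDKernel {X : Type*} (K : X → X → ℂ) : Prop :=
  ∀ (n : ℕ) (x : Fin n → X) (c : Fin n → ℂ),
    0 ≤ ∑ i, ∑ j, conj (c i) * c j * K (x i) (x j)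

lemma sum_ident {X H : Type*} [NormedAddCommGroup H] [InnerProductSpace ℂ H]
    (k : X → H) (g : X → ℂ) (n : ℕ) (x : Fin n → X) (c : Fin n → ℂ) :
    ∑ i, ∑ j, conj (c i) * c j * ((inner ℂ (k (x i)) (k (x j)) : ℂ) - g (x i) * conj (g (x j)))
      = ((‖∑ i, c i • k (x i)‖ : ℂ)^2
          - (Complex.normSq (∑ i, c i * conj (g (x i))) : ℂ)) := by
  have h1 : ((‖∑ i, c i • k (x i)‖ : ℂ))^2
      = ∑ i, ∑ j, conj (c i) * c j * (inner ℂ (k (x i)) (k (x j)) : ℂ) := by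
    have hvv : (inner ℂ (∑ i, c i • k (x i)) (∑ i, c i • k (x i)) : ℂ)
        = ((‖∑ i, c i • k (x i)‖ : ℂ))^2 := by
      exact_mod_cast inner_self_eq_norm_sq_to_K (𝕜 := ℂ) (∑ i, c i • k (x i))
    rw [← hvv]
    simp only [sum_inner, inner_sum, inner_smul_left, inner_smul_right, Finset.mul_sum, mul_assoc]
    rw [Finset.sum_comm]
    exact Finset.sum_congr rfl fun i _ => Finset.sum_congr rfl fun j _ => by ring
  have h2 : (Complex.normSq (∑ i, c i * conj (g (x i))) : ℂ)
      = ∑ i, ∑ j, conj (c i) * c j * (g (x i) * conj (g (x j))) := by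
    rw [Complex.normSq_eq_conj_mul_self]
    rw [map_sum, Finset.sum_mul_sum]
    refine Finset.sum_congr rfl fun i _ => Finset.sum_congr rfl fun j _ => ?_
    simp only [map_mul, RingHom.id_apply, Complex.conj_conj]
    ring
  rw [h1, h2, ← Finset.sum_sub_distrib]
  refine Finset.sum_congr rfl fun i _ => ?_
  rw [← Finset.sum_sub_distrib]
  refine Finset.sum_congr rfl fun j _ => ?_
  ring

/-- In a reproducing kernel Hilbert space `H` with kernel `L(x,y) = ⟪k x, k y⟫`
(`k x` the kernel function at `x`, spanning a dense subspace), a function `g : X → ℂ`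
lies in the closed unit ball of `H` if and only if `L(x,y) − g(x)·conj(g(y))` is a
positive semi-definite kernel. -/
theorem mem_unit_ball_iff_kernel_psd {X H : Type*}
    [NormedAddCommGroup H] [InnerProductSpace ℂ H] [CompleteSpace H]
    (k : X → H)
    (hdense : Dense ((Submodule.span ℂ (Set.range k) : Submodule ℂ H) : Set H))
    (g : X → ℂ) :
    (∃ f : H, ‖f‖ ≤ 1 ∧ ∀ x, g x = (inner ℂ (k x) f : ℂ)) ↔
      IsPSDKernel (fun x y => (inner ℂ (k x) (k y) : ℂ) - g x * conj (g y)) := by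
  constructor
  · rintro ⟨f, hf, hg⟩ n x c
    rw [sum_ident]
    set v := ∑ i, c i • k (x i) with hv
    have ht : ∑ i, c i * conj (g (x i)) = (inner ℂ f v : ℂ) := by
      rw [hv, inner_sum]
      refine Finset.sum_congr rfl fun i _ => ?_
      rw [inner_smul_right, hg, ← inner_conj_symm, Complex.conj_conj]
    rw [ht]
    have hle : ‖(inner ℂ f v : ℂ)‖ ≤ ‖v‖ := by
      calc ‖(inner ℂ f v : ℂ)‖ ≤ ‖f‖ * ‖v‖ := norm_inner_le_norm f v
        _ ≤ 1 * ‖v‖ := by gcongr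
        _ = ‖v‖ := one_mul _
    have heq : ((‖v‖:ℂ)^2 - (Complex.normSq (inner ℂ f v : ℂ) : ℂ))
        = (((‖v‖^2 - Complex.normSq (inner ℂ f v : ℂ)) : ℝ) : ℂ) := by push_cast; ring
    rw [heq, Complex.zero_le_real]
    have h2 : Complex.normSq (inner ℂ f v : ℂ) = ‖(inner ℂ f v : ℂ)‖^2 := by
      rw [Complex.normSq_eq_norm_sq]
    rw [h2]
    nlinarith [norm_nonneg (inner ℂ f v : ℂ), norm_nonneg v]
  · intro hpsd
    set S : (X →₀ ℂ) →ₗ[ℂ] ℂ := Finsupp.linearCombination ℂ (fun y => conj (g y)) with hS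
    set P : (X →₀ ℂ) →ₗ[ℂ] H := Finsupp.linearCombination ℂ k with hP
    have hSP : ∀ c : X →₀ ℂ, ‖S c‖ ≤ ‖P c‖ := by
      intro c
      set n := c.support.card with hn
      set e : Fin n ≃ c.support := c.support.equivFin.symm with he
      set x : Fin n → X := fun i => (e i : X) with hx
      have h0 := hpsd n x (fun i => c (x i))
      simp only [] at h0
      rw [sum_ident k g n x (fun i => c (x i))] at h0
      have hv : ∑ i, c (x i) • k (x i) = P c := by
        rw [hP, Finsupp.linearCombination_apply, Finsupp.sum]
        rw [← Finset.sum_coe_sort c.support (fun y => c y • k y)]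
        exact Fintype.sum_equiv e _ _ (fun i => rfl)
      have ht : ∑ i, c (x i) * conj (g (x i)) = S c := by
        rw [hS, Finsupp.linearCombination_apply, Finsupp.sum]
        rw [← Finset.sum_coe_sort c.support (fun y => c y • conj (g y))]
        exact Fintype.sum_equiv e _ _ (fun i => rfl)
      rw [hv, ht] at h0
      have h1 : ((‖P c‖:ℂ)^2 - (Complex.normSq (S c) : ℂ))
          = (((‖P c‖^2 - Complex.normSq (S c)) : ℝ) : ℂ) := by push_cast; ring
      rw [h1, Complex.zero_le_real] at h0
      have h2 : Complex.normSq (S c) = ‖S c‖^2 := by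
        rw [Complex.normSq_eq_norm_sq]
      rw [h2] at h0
      nlinarith [norm_nonneg (S c), norm_nonneg (P c)]
    have hker : LinearMap.ker P ≤ LinearMap.ker S := by
      intro c hc
      rw [LinearMap.mem_ker] at hc ⊢
      have h := hSP c
      rw [hc, norm_zero] at h
      exact norm_le_zero_iff.mp h
    set ℓ₀lin : LinearMap.range P →ₗ[ℂ] ℂ :=
      ((LinearMap.ker P).liftQ S hker).comp (LinearMap.quotKerEquivRange P).symm.toLinearMap
      with hℓ₀lin
    have hℓ₀c : ∀ c : X →₀ ℂ, ∀ h, ℓ₀lin ⟨P c, h⟩ = S c := by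
      intro c h
      have he : (⟨P c, h⟩ : LinearMap.range P) = LinearMap.quotKerEquivRange P
          (Submodule.Quotient.mk c) := by
        ext
        simp [LinearMap.quotKerEquivRange_apply_mk]
      rw [hℓ₀lin, he]
      simp [Submodule.liftQ_apply]
    have hbound : ∀ v : LinearMap.range P, ‖ℓ₀lin v‖ ≤ 1 * ‖v‖ := by
      rintro ⟨v, c, rfl⟩
      rw [hℓ₀c c ⟨c, rfl⟩, one_mul]
      exact hSP c
    set ℓ₀ : LinearMap.range P →L[ℂ] ℂ := ℓ₀lin.mkContinuous 1 hbound with hℓ₀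
    obtain ⟨ℓ, hℓext, hℓnorm⟩ := exists_extension_norm_eq (LinearMap.range P) ℓ₀
    have hℓ1 : ‖ℓ‖ ≤ 1 := by
      rw [hℓnorm]
      exact LinearMap.mkContinuous_norm_le _ zero_le_one _
    refine ⟨(InnerProductSpace.toDual ℂ H).symm ℓ, ?_, ?_⟩
    · rw [LinearIsometryEquiv.norm_map]
      exact hℓ1
    · intro x
      have hkx : k x ∈ LinearMap.range P := ⟨Finsupp.single x 1, by simp [hP]⟩
      have h1 : ℓ (k x) = conj (g x) := by
        have h4 : P (Finsupp.single x 1) = k x := by simp [hP]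
        have h2 := hℓext ⟨k x, hkx⟩
        rw [h2, hℓ₀, LinearMap.mkContinuous_apply]
        have h3 : (⟨k x, hkx⟩ : LinearMap.range P)
            = ⟨P (Finsupp.single x 1), LinearMap.mem_range_self P _⟩ := Subtype.ext h4.symm
        rw [h3, hℓ₀c]
        simp [hS]
      rw [← inner_conj_symm, InnerProductSpace.toDual_symm_apply, h1, Complex.conj_conj]
end

section
/- Define c_n = 1 − n^{-2} and h_n(z) = exp(−(1/n)·(1+c_n z)/(1−c_n z)) − exp(−(1/n)·(1+c_n)/(1−c_n)) for z in the closed unit disk. Then h_n is holomorphic on a neighborhood of the closed disk, h_n(1) = 0, ‖h_n‖_∞ ≤ 1 + o(1) as n → ∞, and h_n → 1 uniformly on compact subsets of the open disk 𝔻. -/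
/-- `c_n = 1 − 1/n²`. -/
noncomputable def cseq (n : ℕ) : ℂ := 1 - 1 / (n : ℂ) ^ 2

/-- `h_n(z) = exp(−(1/n)(1+c_n z)/(1−c_n z)) − exp(−(1/n)(1+c_n)/(1−c_n))`. -/
noncomputable def hseq (n : ℕ) (z : ℂ) : ℂ :=
  Complex.exp (-(1 / (n : ℂ)) * ((1 + cseq n * z) / (1 - cseq n * z))) -
    Complex.exp (-(1 / (n : ℂ)) * ((1 + cseq n) / (1 - cseq n)))

open Filter Complex

lemma aux_re (w : ℂ) (hw : ‖w‖ ≤ 1) : 0 ≤ ((1 + w) / (1 - w)).re := by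
  have h1 : Complex.normSq w ≤ 1 := by
    rw [← Complex.sq_norm]; nlinarith [norm_nonneg w]
  rw [Complex.div_re, ← add_div]
  apply div_nonneg _ (Complex.normSq_nonneg _)
  simp only [Complex.add_re, Complex.sub_re, Complex.one_re, Complex.add_im,
    Complex.sub_im, Complex.one_im, Complex.normSq_apply] at h1 ⊢
  nlinarith

lemma cseq_real (n : ℕ) : cseq n = ((1 - 1 / (n : ℝ) ^ 2 : ℝ) : ℂ) := by
  simp [cseq]

lemma cseq_abs_lt (n : ℕ) (hn : 1 ≤ n) : ‖cseq n‖ < 1 := by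
  have hn' : (1 : ℝ) ≤ (n : ℝ) := by exact_mod_cast hn
  have h2 : (0 : ℝ) < (n : ℝ) ^ 2 := by positivity
  have h3 : (0 : ℝ) < 1 / (n : ℝ) ^ 2 := by positivity
  have h4 : 1 / (n : ℝ) ^ 2 ≤ 1 := by rw [div_le_one h2]; nlinarith
  rw [cseq_real, Complex.norm_real, Real.norm_eq_abs, abs_lt]
  constructor <;> linarith

lemma denom_ne (n : ℕ) (hn : 1 ≤ n) (z : ℂ) (hz : ‖z‖ ≤ 1) :
    1 - cseq n * z ≠ 0 := by
  intro h
  have h1 : cseq n * z = 1 := by linear_combination -h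
  have h2 : ‖cseq n * z‖ < 1 := by
    rw [norm_mul]
    calc ‖cseq n‖ * ‖z‖ ≤ ‖cseq n‖ * 1 :=
          mul_le_mul_of_nonneg_left hz (norm_nonneg _)
      _ < 1 := by simpa using cseq_abs_lt n hn
  rw [h1] at h2; simp at h2

lemma const_exponent (n : ℕ) (hn : 1 ≤ n) :
    -(1 / (n : ℂ)) * ((1 + cseq n) / (1 - cseq n)) = ((1 / (n : ℝ) - 2 * n : ℝ) : ℂ) := by
  have hN : (n : ℂ) ≠ 0 := Nat.cast_ne_zero.mpr (by omega)
  simp only [cseq]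
  push_cast
  field_simp
  ring

lemma abs_const_le (n : ℕ) (hn : 1 ≤ n) :
    ‖Complex.exp (-(1 / (n : ℂ)) * ((1 + cseq n) / (1 - cseq n)))‖ ≤
      Real.exp (1 - 2 * n) := by
  rw [const_exponent n hn, Complex.norm_exp]
  have hn' : (1 : ℝ) ≤ (n : ℝ) := by exact_mod_cast hn
  have : (1 : ℝ) / n ≤ 1 := by
    rw [div_le_one (by linarith)]; linarith
  apply Real.exp_le_exp.mpr
  simp only [Complex.ofReal_re]
  linarith

lemma eps_tendsto : Tendsto (fun n : ℕ => Real.exp (1 - 2 * n)) atTop (nhds 0) := by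
  have h2 : Tendsto (fun n : ℕ => (1 : ℝ) - 2 * n) atTop atBot := by
    apply tendsto_atBot_add_const_left
    exact tendsto_neg_atTop_atBot.comp (tendsto_natCast_atTop_atTop.const_mul_atTop two_pos)
  exact Real.tendsto_exp_atBot.comp h2

lemma exponent_re_nonpos (n : ℕ) (z : ℂ) (hz : ‖cseq n * z‖ ≤ 1) :
    (-(1 / (n : ℂ)) * ((1 + cseq n * z) / (1 - cseq n * z))).re ≤ 0 := by
  have h1 : -(1 / (n : ℂ)) = ((-(1 / (n : ℝ)) : ℝ) : ℂ) := by push_cast; ring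
  rw [h1, Complex.re_ofReal_mul]
  have h2 := aux_re (cseq n * z) hz
  have h3 : (0 : ℝ) ≤ 1 / (n : ℝ) := by positivity
  nlinarith

/-- Each `h_n` is holomorphic on a neighborhood of the closed unit disk, vanishes at `1`,
`‖h_n‖_∞ ≤ 1 + o(1)` as `n → ∞`, and `h_n → 1` uniformly on compact subsets of `𝔻`. -/
theorem hseq_properties :
    (∀ n : ℕ, 1 ≤ n → ∃ U : Set ℂ, IsOpen U ∧ Metric.closedBall (0 : ℂ) 1 ⊆ U ∧
        DifferentiableOn ℂ (hseq n) U) ∧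
    (∀ n : ℕ, 1 ≤ n → hseq n 1 = 0) ∧
    (∃ ε : ℕ → ℝ, Filter.Tendsto ε Filter.atTop (nhds 0) ∧
        ∀ n : ℕ, 1 ≤ n → ∀ z ∈ Metric.ball (0 : ℂ) 1,
          ‖hseq n z‖ ≤ 1 + ε n) ∧
    (∀ Kc : Set ℂ, Kc ⊆ Metric.ball (0 : ℂ) 1 → IsCompact Kc →
        TendstoUniformlyOn (fun n => hseq n) (fun _ => 1) Filter.atTop Kc) := by
  refine ⟨?_, ?_, ?_, ?_⟩
  · -- holomorphy
    intro n hn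
    refine ⟨{z | 1 - cseq n * z ≠ 0}, ?_, ?_, ?_⟩
    · have hc : Continuous fun z : ℂ => 1 - cseq n * z := by continuity
      have ho : IsOpen {x : ℂ | x ≠ 0} := isOpen_ne
      exact ho.preimage hc
    · intro z hz
      have hz' : ‖z‖ ≤ 1 := by
        exact mem_closedBall_zero_iff.mp hz
      exact denom_ne n hn z hz'
    · unfold hseq
      apply DifferentiableOn.sub _ (differentiableOn_const _)
      apply DifferentiableOn.cexp
      apply DifferentiableOn.mul (differentiableOn_const _)
      apply DifferentiableOn.div
      · exact (differentiable_const _ |>.add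
          ((differentiable_const _).mul differentiable_id)).differentiableOn
      · exact (differentiable_const _ |>.sub
          ((differentiable_const _).mul differentiable_id)).differentiableOn
      · intro z hz; exact hz
  · intro n hn
    simp [hseq]
  · -- sup bound
    refine ⟨fun n => Real.exp (1 - 2 * n), eps_tendsto, ?_⟩
    intro n hn z hz
    have hz' : ‖z‖ < 1 := by
      exact mem_ball_zero_iff.mp hz
    have hcz : ‖cseq n * z‖ ≤ 1 := by
      rw [norm_mul]
      calc ‖cseq n‖ * ‖z‖ ≤ 1 * 1 :=
            mul_le_mul (cseq_abs_lt n hn).le hz'.le (norm_nonneg _) zero_le_one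
        _ = 1 := by ring
    unfold hseq
    calc ‖_‖ ≤
        ‖Complex.exp (-(1 / (n : ℂ)) * ((1 + cseq n * z) / (1 - cseq n * z)))‖ +
          ‖Complex.exp (-(1 / (n : ℂ)) * ((1 + cseq n) / (1 - cseq n)))‖ :=
            norm_sub_le _ _
      _ ≤ 1 + Real.exp (1 - 2 * n) := by
          gcongr
          · rw [Complex.norm_exp, Real.exp_le_one_iff]
            exact exponent_re_nonpos n z hcz
          · exact abs_const_le n hn
  · -- uniform convergence on compacts
    intro K hK hKc
    rcases K.eq_empty_or_nonempty with rfl | hne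
    · exact tendstoUniformlyOn_empty
    obtain ⟨z0, hz0K, hz0⟩ := hKc.exists_isMaxOn hne continuous_norm.continuousOn
    set r := ‖z0‖ with hr_def
    have hr0 : 0 ≤ r := norm_nonneg _
    have hr1 : r < 1 := by
      have h := hK hz0K
      rw [hr_def]; exact mem_ball_zero_iff.mp h
    have hr1' : (0 : ℝ) < 1 - r := by linarith
    set b : ℕ → ℝ := fun n => 2 / ((n : ℝ) * (1 - r)) with hb_def
    have hb0 : Tendsto b atTop (nhds 0) := by
      have hbe : b = fun n : ℕ => (2 / (1 - r)) * (1 / n) := by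
        funext n
        rw [hb_def]
        rcases eq_or_ne (n : ℝ) 0 with h | h
        · simp [h]
        · field_simp
      rw [hbe]
      simpa using tendsto_one_div_atTop_nhds_zero_nat.const_mul (2 / (1 - r))
    have hg : Tendsto (fun n : ℕ => 2 * b n + Real.exp (1 - 2 * n)) atTop (nhds 0) := by
      have := (hb0.const_mul 2).add eps_tendsto
      simpa using this
    rw [Metric.tendstoUniformlyOn_iff]
    intro ε hε
    have h1 : ∀ᶠ n : ℕ in atTop, 2 * b n + Real.exp (1 - 2 * n) < ε :=
      hg.eventually (eventually_lt_nhds hε)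
    have h2 : ∀ᶠ n : ℕ in atTop, b n ≤ 1 :=
      hb0.eventually (eventually_le_nhds zero_lt_one)
    filter_upwards [h1, h2, eventually_ge_atTop 1] with n hn1 hn2 hn3 z hzK
    have hnR : (1 : ℝ) ≤ (n : ℝ) := by exact_mod_cast hn3
    have hzr : ‖z‖ ≤ r := hz0 hzK
    have hcz : ‖cseq n * z‖ ≤ r := by
      rw [norm_mul]
      calc ‖cseq n‖ * ‖z‖ ≤ 1 * r :=
            mul_le_mul (cseq_abs_lt n hn3).le hzr (norm_nonneg _) zero_le_one
        _ = r := one_mul r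
    set w := -(1 / (n : ℂ)) * ((1 + cseq n * z) / (1 - cseq n * z)) with hw_def
    set cst := -(1 / (n : ℂ)) * ((1 + cseq n) / (1 - cseq n)) with hcst_def
    have hden : 1 - r ≤ ‖1 - cseq n * z‖ := by
      calc 1 - r ≤ 1 - ‖cseq n * z‖ := by linarith
        _ ≤ ‖1 - cseq n * z‖ := by
            have h := norm_sub_norm_le (1 : ℂ) (cseq n * z)
            simpa using h
    have hnum : ‖1 + cseq n * z‖ ≤ 2 := by
      calc ‖1 + cseq n * z‖ ≤ ‖1‖ + ‖cseq n * z‖ :=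
            norm_add_le _ _
        _ ≤ 1 + 1 := by simp only [norm_one]; linarith
        _ = 2 := by norm_num
    have habsw : ‖w‖ ≤ b n := by
      rw [hw_def, norm_mul, norm_div]
      have h5 : ‖-(1 / (n : ℂ))‖ = 1 / (n : ℝ) := by
        rw [norm_neg, norm_div]; simp
      rw [h5]
      have key : ‖1 + cseq n * z‖ / ‖1 - cseq n * z‖ ≤ 2 / (1 - r) :=
        div_le_div₀ (by norm_num) hnum hr1' hden
      have hnpos : (0 : ℝ) < (n : ℝ) := by linarith
      calc 1 / (n : ℝ) * (‖1 + cseq n * z‖ / ‖1 - cseq n * z‖) ≤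
            1 / (n : ℝ) * (2 / (1 - r)) := by
              apply mul_le_mul_of_nonneg_left key (by positivity)
        _ = b n := by rw [hb_def]; field_simp
    have hwle1 : ‖w‖ ≤ 1 := le_trans habsw hn2
    have hexp1 : ‖Complex.exp w - 1‖ ≤ 2 * ‖w‖ :=
      Complex.norm_exp_sub_one_le hwle1
    have hconst : ‖Complex.exp cst‖ ≤ Real.exp (1 - 2 * n) := abs_const_le n hn3
    have hdist : dist (1 : ℂ) (hseq n z) ≤ 2 * b n + Real.exp (1 - 2 * n) := by
      rw [Complex.dist_eq]
      have heq : (1 : ℂ) - hseq n z = -(Complex.exp w - 1) + Complex.exp cst := by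
        simp only [hseq, hw_def, hcst_def]; ring
      rw [heq]
      calc ‖-(Complex.exp w - 1) + Complex.exp cst‖ ≤
            ‖-(Complex.exp w - 1)‖ + ‖Complex.exp cst‖ :=
              norm_add_le _ _
        _ = ‖Complex.exp w - 1‖ + ‖Complex.exp cst‖ := by
              rw [norm_neg]
        _ ≤ 2 * ‖w‖ + Real.exp (1 - 2 * n) := add_le_add hexp1 hconst
        _ ≤ 2 * b n + Real.exp (1 - 2 * n) := by linarith
    exact lt_of_le_of_lt hdist hn1
end

section
/- Let K be a positive semi-definite M_α-valued kernel on a set V, u ∈ V, and γ ∈ ℂ^α with K(u,u)γ ≠ 0. Then the kernel K'(x,y) := ⟨K(u,u)γ, γ⟩·K(x,y) − K(x,u)γγ*K(u,y) is positive semi-definite on V. -/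
open ComplexConjugate ComplexOrder Matrix

/-- A matrix-valued kernel is positive semi-definite if all finite block Gram matrices
are positive semi-definite. -/
def IsPSDMatKernel {V : Type*} {α : ℕ} (K : V → V → Matrix (Fin α) (Fin α) ℂ) : Prop :=
  ∀ (n : ℕ) (x : Fin n → V) (c : Fin n → (Fin α → ℂ)),
    0 ≤ ∑ i, ∑ j, star (c i) ⬝ᵥ (K (x i) (x j)).mulVec (c j)

lemma key_cs (A S T a : ℂ) (ha : 0 ≤ a)
    (hP : ∀ l : ℂ, 0 ≤ A + l * S + conj l * T + conj l * l * a) :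
    0 ≤ a * A - S * T := by
  have hA : 0 ≤ A := by simpa using hP 0
  have hAre : 0 ≤ A.re := hA.1
  have hAim : A.im = 0 := (Complex.le_def.mp hA).2.symm
  have hare : 0 ≤ a.re := ha.1
  have haim : a.im = 0 := (Complex.le_def.mp ha).2.symm
  have h1 := (Complex.le_def.mp (hP 1)).2
  have hI := (Complex.le_def.mp (hP Complex.I)).2
  simp [Complex.add_im, Complex.mul_im, Complex.conj_re, Complex.conj_im, hAim, haim] at h1 hI
  have hST : S = conj T := by
    apply Complex.ext <;> simp [Complex.conj_re, Complex.conj_im] <;> linarith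
  have hr : ∀ r : ℝ, 0 ≤ A.re - 2 * r * Complex.normSq T + r ^ 2 * Complex.normSq T * a.re := by
    intro r
    have h := (hP (-(r : ℂ) * T)).1
    rw [hST] at h
    simp only [_root_.map_mul, map_neg, Complex.conj_conj, Complex.conj_ofReal] at h
    have heq : (A + -(r:ℂ) * T * conj T + -(r:ℂ) * conj T * T + -(r:ℂ) * conj T * (-(r:ℂ) * T) * a).re
        = A.re - 2 * r * Complex.normSq T + r ^ 2 * Complex.normSq T * a.re := by
      simp [Complex.add_re, Complex.mul_re, Complex.mul_im, Complex.conj_re, Complex.conj_im,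
        Complex.normSq_apply, haim]
      ring
    rw [heq] at h
    exact h
  have hSTval : S * T = (Complex.normSq T : ℂ) := by rw [hST, mul_comm, Complex.mul_conj]
  have hn : 0 ≤ Complex.normSq T := Complex.normSq_nonneg T
  have hkey : Complex.normSq T ≤ a.re * A.re := by
    rcases eq_or_lt_of_le hare with h0 | hpos
    · rcases eq_or_lt_of_le hn with hn0 | hnpos
      · rw [← hn0, ← h0]; ring_nf; rfl
      · exfalso
        have h := hr ((A.re + 1) / (2 * Complex.normSq T))
        rw [← h0] at h
        rw [div_eq_mul_inv] at h
        have hne : (2 * Complex.normSq T) ≠ 0 := by positivity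
        nlinarith [mul_pos hnpos hnpos, mul_inv_cancel₀ hne]
    · have h := hr (1 / a.re)
      have h5 : 0 ≤ (A.re - 2 * (1/a.re) * Complex.normSq T
          + (1/a.re) ^ 2 * Complex.normSq T * a.re) * a.re := mul_nonneg h hare
      have hane : a.re ≠ 0 := ne_of_gt hpos
      field_simp at h5
      have h6 : 0 ≤ (A.re * a.re - Complex.normSq T) * a.re ^ 3 := by nlinarith [h5, pow_pos hpos 3]
      have h7 := (mul_nonneg_iff_of_pos_right (pow_pos hpos 3)).mp h6
      linarith
  constructor
  · simp [hSTval, Complex.sub_re, Complex.mul_re, haim, hAim]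
    linarith
  · simp [hSTval, Complex.sub_im, Complex.mul_im, haim, hAim]

lemma vecMulVec_mulVec' {α : ℕ} (v w c : Fin α → ℂ) :
    (Matrix.vecMulVec v w).mulVec c = (w ⬝ᵥ c) • v := by
  ext i
  simp [Matrix.mulVec, Matrix.vecMulVec_apply, dotProduct, Finset.mul_sum, mul_comm,
    mul_assoc, mul_left_comm]

/-- For a PSD `M_α`-valued kernel `K`, `u ∈ V` and `γ ∈ ℂ^α` with `K(u,u)γ ≠ 0`, the kernel
`K'(x,y) = ⟨K(u,u)γ,γ⟩·K(x,y) − K(x,u)γγ*K(u,y)` is positive semi-definite. -/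
theorem schur_complement_kernel_psd {V : Type*} {α : ℕ}
    (K : V → V → Matrix (Fin α) (Fin α) ℂ) (hK : IsPSDMatKernel K)
    (u : V) (γ : Fin α → ℂ) (hγ : (K u u).mulVec γ ≠ 0) :
    IsPSDMatKernel (fun x y =>
      (star γ ⬝ᵥ (K u u).mulVec γ) • K x y -
        Matrix.vecMulVec ((K x u).mulVec γ) (Matrix.vecMul (star γ) (K u y))) := by
  intro n x c
  set a : ℂ := star γ ⬝ᵥ (K u u).mulVec γ with ha_def
  set A : ℂ := ∑ i, ∑ j, star (c i) ⬝ᵥ (K (x i) (x j)).mulVec (c j) with hA_def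
  set S : ℂ := ∑ i, star (c i) ⬝ᵥ (K (x i) u).mulVec γ with hS_def
  set T : ℂ := ∑ j, star γ ⬝ᵥ (K u (x j)).mulVec (c j) with hT_def
  have ha : 0 ≤ a := by
    have := hK 1 (fun _ => u) (fun _ => γ)
    simpa using this
  have hP : ∀ l : ℂ, 0 ≤ A + l * S + conj l * T + conj l * l * a := by
    intro l
    have h := hK (n+1) (Fin.snoc x u) (Fin.snoc c (l • γ))
    simp only [Fin.sum_univ_castSucc, Fin.snoc_castSucc, Fin.snoc_last, star_smul,
      Matrix.mulVec_smul, smul_dotProduct, dotProduct_smul, smul_eq_mul, Complex.star_def,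
      Finset.sum_add_distrib, ← Finset.mul_sum] at h
    rw [hA_def, hS_def, hT_def, ha_def]
    convert h using 1
    ring
  have hgoal : ∑ i, ∑ j, star (c i) ⬝ᵥ
      ((a • K (x i) (x j) -
        Matrix.vecMulVec ((K (x i) u).mulVec γ)
          (Matrix.vecMul (star γ) (K u (x j)))).mulVec (c j)) = a * A - S * T := by
    have hterm : ∀ i j, star (c i) ⬝ᵥ
        ((a • K (x i) (x j) -
          Matrix.vecMulVec ((K (x i) u).mulVec γ)
            (Matrix.vecMul (star γ) (K u (x j)))).mulVec (c j))
        = a * (star (c i) ⬝ᵥ (K (x i) (x j)).mulVec (c j))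
          - (star (c i) ⬝ᵥ (K (x i) u).mulVec γ)
            * (star γ ⬝ᵥ (K u (x j)).mulVec (c j)) := by
      intro i j
      rw [Matrix.sub_mulVec, dotProduct_sub, Matrix.smul_mulVec, dotProduct_smul,
        vecMulVec_mulVec', dotProduct_smul]
      simp only [smul_eq_mul, ← Matrix.dotProduct_mulVec]
      ring
    simp only [hterm, Finset.sum_sub_distrib, ← Finset.mul_sum, ← Finset.sum_mul]
    rfl
  rw [show (∑ i, ∑ j, star (c i) ⬝ᵥ
      ((fun x y => a • K x y -
        Matrix.vecMulVec ((K x u).mulVec γ) (Matrix.vecMul (star γ) (K u y))) (x i) (x j)).mulVec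
        (c j)) = a * A - S * T from hgoal]
  exact key_cs A S T a ha hP
end
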